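/- Let f be continuous with primitive F, Q(s) = 2N F(s) - (N-2) s f(s), N ≥ 2, and u a C² solution of u'' + ((N-1)/r)u' + f(u) = 0 on [0,R] with u(0)=α, u'(0)=0. Suppose Q(u(t)) ≥ -Q̄ for all t ∈ [0,R] (with Q̄ ≥ 0). Then for E(r) = 2r^N I(r) + (N-2) r^{N-1} u'(r) u(r), one has E(r) ≥ E(r₀) - Q̄ (r^N - r₀^N)/N for all 0 ≤ r₀ ≤ r ≤ R. -/

import Mathlib

open Set

/-- Pohozaev energy lower bound: if Q(u(t)) ≥ -Q̄ on [0,R], then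
E(r) ≥ E(r₀) - Q̄ (r^N - r₀^N)/N. -/
theorem pohozaev_energy_lower_bound
    (N : ℕ) (hN : 2 ≤ N) (f : ℝ → ℝ) (hf : Continuous f)
    (R α Qbar : ℝ) (hR : 0 < R) (hQbar : 0 ≤ Qbar)
    (u u' : ℝ → ℝ)
    (hu : ∀ r ∈ Icc (0:ℝ) R, HasDerivAt u (u' r) r)
    (hode : ∀ r ∈ Ioc (0:ℝ) R,
      HasDerivAt u' (-(((N:ℝ) - 1) / r * u' r + f (u r))) r)
    (hu'cont : ContinuousOn u' (Icc (0:ℝ) R))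
    (hu0 : u 0 = α) (hu'0 : u' 0 = 0)
    (hQ : ∀ t ∈ Icc (0:ℝ) R,
      -Qbar ≤ 2 * (N:ℝ) * (∫ s in (0:ℝ)..(u t), f s) - ((N:ℝ) - 2) * u t * f (u t)) :
    ∀ r₀ r : ℝ, 0 ≤ r₀ → r₀ ≤ r → r ≤ R →
      (2 * r₀ ^ N * ((u' r₀) ^ 2 / 2 + ∫ s in (0:ℝ)..(u r₀), f s)
        + ((N:ℝ) - 2) * r₀ ^ (N - 1) * u' r₀ * u r₀)
        - Qbar * (r ^ N - r₀ ^ N) / N ≤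
      2 * r ^ N * ((u' r) ^ 2 / 2 + ∫ s in (0:ℝ)..(u r), f s)
        + ((N:ℝ) - 2) * r ^ (N - 1) * u' r * u r := by
  obtain ⟨m, rfl⟩ : ∃ m, N = m + 2 := ⟨N - 2, by omega⟩
  have hFcont : Continuous (fun x : ℝ => ∫ s in (0:ℝ)..x, f s) :=
    intervalIntegral.continuous_primitive (fun a b => hf.intervalIntegrable a b) 0
  set G : ℝ → ℝ := fun r =>
    (2 * r ^ (m+2) * ((u' r) ^ 2 / 2 + ∫ s in (0:ℝ)..(u r), f s)
      + ((↑(m+2) : ℝ) - 2) * r ^ (m + 2 - 1) * u' r * u r)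
      + Qbar * r ^ (m+2) / (↑(m+2) : ℝ) with hGdef
  have hucont : ContinuousOn u (Icc 0 R) :=
    fun x hx => (hu x hx).continuousAt.continuousWithinAt
  have hGcont : ContinuousOn G (Icc 0 R) := by
    apply ContinuousOn.add
    apply ContinuousOn.add
    · exact (continuous_const.mul (continuous_pow _)).continuousOn.mul
        (((hu'cont.pow 2).div_const 2).add (hFcont.comp_continuousOn hucont))
    · exact (((continuous_const.mul (continuous_pow _)).continuousOn.mul hu'cont)).mul hucont
    · exact ((continuous_const.mul (continuous_pow _)).div_const _).continuousOn
  have hG : ∀ r ∈ Ioo (0:ℝ) R, HasDerivAt G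
      (r ^ (m+1) * ((2 * ((m:ℝ)+2) * ∫ s in (0:ℝ)..(u r), f s)
        - (m:ℝ) * u r * f (u r) + Qbar)) r := by
    intro r hr
    have hrne : r ≠ 0 := ne_of_gt hr.1
    have hrI : r ∈ Icc (0:ℝ) R := ⟨hr.1.le, hr.2.le⟩
    have h1 := hu r hrI
    have h2 := hode r ⟨hr.1, hr.2.le⟩
    have hF : HasDerivAt (fun x : ℝ => ∫ s in (0:ℝ)..x, f s) (f (u r)) (u r) :=
      intervalIntegral.integral_hasDerivAt_right (hf.intervalIntegrable _ _)
        (hf.stronglyMeasurableAtFilter _ _) hf.continuousAt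
    have hFu := hF.comp r h1
    have hpow2 : HasDerivAt (fun x : ℝ => x ^ (m+2)) ((↑(m+2) : ℝ) * r ^ (m+1)) r := by
      simpa using hasDerivAt_pow (m+2) r
    have hpow1 : HasDerivAt (fun x : ℝ => x ^ (m+2-1)) ((↑(m+1) : ℝ) * r ^ m) r := by
      simpa using hasDerivAt_pow (m+1) r
    have hE := (((hpow2.const_mul 2).mul (((h2.pow 2).div_const 2).add hFu)).add
      (((hpow1.const_mul ((↑(m+2) : ℝ) - 2)).mul h2).mul h1)).add
      ((hpow2.const_mul Qbar).div_const (↑(m+2) : ℝ))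
    refine hE.congr_deriv ?_
    simp only [Pi.add_apply, Pi.mul_apply, Pi.pow_apply, Function.comp_apply]
    have hm2 : ((m:ℝ) + 2) ≠ 0 := by positivity
    push_cast
    field_simp
    ring
  have hmono : MonotoneOn G (Icc 0 R) := by
    apply monotoneOn_of_deriv_nonneg (convex_Icc 0 R) hGcont
    · intro x hx
      rw [interior_Icc] at hx
      exact (hG x hx).differentiableAt.differentiableWithinAt
    · intro x hx
      rw [interior_Icc] at hx
      rw [(hG x hx).deriv]
      have hq := hQ x ⟨hx.1.le, hx.2.le⟩
      have hb : (0:ℝ) ≤ (2 * ((m:ℝ)+2) * ∫ s in (0:ℝ)..(u x), f s)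
          - (m:ℝ) * u x * f (u x) + Qbar := by
        push_cast at hq
        nlinarith [hq]
      have : (0:ℝ) ≤ x ^ (m+1) := pow_nonneg hx.1.le _
      nlinarith [this, hb]
  intro r₀ r h0 h01 h1
  have hkey := hmono ⟨h0, h01.trans h1⟩ ⟨h0.trans h01, h1⟩ h01
  rw [hGdef] at hkey
  simp only at hkey
  have e : Qbar * (r ^ (m+2) - r₀ ^ (m+2)) / (↑(m+2) : ℝ)
      = Qbar * r ^ (m+2) / (↑(m+2) : ℝ) - Qbar * r₀ ^ (m+2) / (↑(m+2) : ℝ) := by ring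
  rw [e]
  linarith [hkey]
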